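/- Let p be an odd prime and θ a primitive root modulo p. For each t with 1 ≤ t ≤ p−1, let a_t be the unique residue modulo p(p−1) with a_t ≡ t (mod p−1) and a_t ≡ θ^t (mod p). Then the set A = {a_t : 1 ≤ t ≤ p−1} is a Sidon set modulo p²−p: for every k, the number of ordered pairs (x,y) ∈ A×A with x+y ≡ k (mod p²−p) is at most 2. -/

import Mathlib

private lemma bounded_eq {M a b : ℤ} (ha0 : 0 ≤ a) (ha1 : a < M) (hb0 : 0 ≤ b) (hb1 : b < M)
    (h : a ≡ b [ZMOD M]) : a = b := by
  have hd : M ∣ b - a := h.dvd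
  have : b - a = 0 := Int.eq_zero_of_abs_lt_dvd hd (by rw [abs_lt]; omega)
  omega

private lemma t_unique {p : ℕ} (hp : 2 ≤ p) {t t' : ℕ}
    (ht : t ∈ Finset.Icc 1 (p - 1)) (ht' : t' ∈ Finset.Icc 1 (p - 1))
    (h : t ≡ t' [MOD p - 1]) : t = t' := by
  simp only [Finset.mem_Icc] at ht ht'
  have hd : ((p - 1 : ℕ) : ℤ) ∣ (t' : ℤ) - t := (Nat.modEq_iff_dvd).mp h
  have : (t' : ℤ) - t = 0 := Int.eq_zero_of_abs_lt_dvd hd (by rw [abs_lt]; push_cast; omega)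
  omega

private lemma a_unique {p : ℕ} (hp : p.Prime) {a b : ℤ}
    (ha0 : 0 ≤ a) (ha1 : a < (p : ℤ) * ((p : ℤ) - 1))
    (hb0 : 0 ≤ b) (hb1 : b < (p : ℤ) * ((p : ℤ) - 1))
    (h1 : a ≡ b [ZMOD ((p : ℤ) - 1)]) (h2 : a ≡ b [ZMOD (p : ℤ)]) : a = b := by
  have hcop : IsCoprime (p : ℤ) ((p : ℤ) - 1) := ⟨1, -1, by ring⟩
  have hg : (p : ℤ).natAbs.Coprime ((p : ℤ) - 1).natAbs := by
    rwa [Int.isCoprime_iff_gcd_eq_one] at hcop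
  exact bounded_eq ha0 ha1 hb0 hb1 ((Int.modEq_and_modEq_iff_modEq_mul hg).mp ⟨h2, h1⟩)

private lemma key_lemma {p : ℕ} (hp : p.Prime) {θ : ℤ}
    (hθ : IsPrimitiveRoot (θ : ZMod p) (p - 1)) {t1 t2 t3 t4 : ℕ}
    (h1 : t1 ∈ Finset.Icc 1 (p - 1)) (h2 : t2 ∈ Finset.Icc 1 (p - 1))
    (h3 : t3 ∈ Finset.Icc 1 (p - 1)) (h4 : t4 ∈ Finset.Icc 1 (p - 1))
    (hsum : t1 + t2 ≡ t3 + t4 [MOD p - 1])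
    (hmod : θ ^ t1 + θ ^ t2 ≡ θ ^ t3 + θ ^ t4 [ZMOD (p : ℤ)]) :
    (t1 = t3 ∧ t2 = t4) ∨ (t1 = t4 ∧ t2 = t3) := by
  haveI : Fact p.Prime := ⟨hp⟩
  have hp2 : 2 ≤ p := hp.two_le
  have hpos : 0 < p - 1 := by omega
  obtain ⟨v, hv⟩ := hθ.isUnit hpos.ne'
  have hordv : orderOf v = p - 1 := by
    rw [← orderOf_units, hv, ← hθ.eq_orderOf]
  have hpow : ∀ s t : ℕ, (θ : ZMod p) ^ s = (θ : ZMod p) ^ t ↔ s ≡ t [MOD p - 1] := by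
    intro s t
    rw [← hv, ← Units.val_pow_eq_pow_val, ← Units.val_pow_eq_pow_val]
    constructor
    · intro h
      have h' : v ^ s = v ^ t := Units.ext h
      rw [pow_eq_pow_iff_modEq, hordv] at h'
      exact h'
    · intro h
      congr 1
      rw [pow_eq_pow_iff_modEq, hordv]
      exact h
  have hadd : (θ : ZMod p) ^ t1 + (θ : ZMod p) ^ t2
      = (θ : ZMod p) ^ t3 + (θ : ZMod p) ^ t4 := by
    have := (ZMod.intCast_eq_intCast_iff _ _ _).mpr hmod
    push_cast at this
    exact this
  have hprod : (θ : ZMod p) ^ t1 * (θ : ZMod p) ^ t2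
      = (θ : ZMod p) ^ t3 * (θ : ZMod p) ^ t4 := by
    rw [← pow_add, ← pow_add]
    exact (hpow _ _).mpr hsum
  have hsplit : ((θ : ZMod p) ^ t3 - (θ : ZMod p) ^ t1)
      * ((θ : ZMod p) ^ t3 - (θ : ZMod p) ^ t2) = 0 := by
    linear_combination (-((θ : ZMod p) ^ t3)) * hadd + hprod
  rcases mul_eq_zero.mp hsplit with h | h
  · left
    have h13 : (θ : ZMod p) ^ t3 = (θ : ZMod p) ^ t1 := sub_eq_zero.mp h
    have ht13 : t1 = t3 := t_unique hp2 h1 h3 ((hpow t3 t1).mp h13).symm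
    refine ⟨ht13, ?_⟩
    have h24 : (θ : ZMod p) ^ t2 = (θ : ZMod p) ^ t4 := by
      have := hadd
      rw [h13] at this
      exact add_left_cancel this
    exact t_unique hp2 h2 h4 ((hpow t2 t4).mp h24)
  · right
    have h23 : (θ : ZMod p) ^ t3 = (θ : ZMod p) ^ t2 := sub_eq_zero.mp h
    have ht23 : t2 = t3 := t_unique hp2 h2 h3 ((hpow t3 t2).mp h23).symm
    refine ⟨?_, ht23⟩
    have h14 : (θ : ZMod p) ^ t1 = (θ : ZMod p) ^ t4 := by
      have := hadd
      rw [h23, add_comm ((θ : ZMod p) ^ t1)] at this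
      exact add_left_cancel this
    exact t_unique hp2 h1 h4 ((hpow t1 t4).mp h14)

private lemma encard_le_two_of_pairs {α : Type*} {S : Set (α × α)}
    (h : ∀ q ∈ S, ∀ q' ∈ S, q' = q ∨ q' = q.swap) : S.encard ≤ 2 := by
  rcases S.eq_empty_or_nonempty with rfl | ⟨q, hq⟩
  · simp
  · have hsub : S ⊆ {q, q.swap} := by
      intro q' hq'
      rcases h q hq q' hq' with rfl | rfl <;> simp
    calc S.encard ≤ ({q, q.swap} : Set (α × α)).encard := Set.encard_mono hsub
      _ ≤ ({q.swap} : Set (α × α)).encard + 1 := Set.encard_insert_le _ _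
      _ ≤ 2 := by rw [Set.encard_singleton]; norm_num

theorem ruzsa_sidon_construction (p : ℕ) (hp : p.Prime) (hodd : Odd p)
    (θ : ℤ) (hθ : IsPrimitiveRoot (θ : ZMod p) (p - 1)) :
    ∀ k : ℤ,
      {q : ℤ × ℤ |
        (q.1 ∈ {a : ℤ | 0 ≤ a ∧ a < (p : ℤ) * (p - 1) ∧
          ∃ t ∈ Finset.Icc 1 (p - 1), a ≡ (t : ℤ) [ZMOD ((p : ℤ) - 1)] ∧
            a ≡ θ ^ t [ZMOD (p : ℤ)]}) ∧
        (q.2 ∈ {a : ℤ | 0 ≤ a ∧ a < (p : ℤ) * (p - 1) ∧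
          ∃ t ∈ Finset.Icc 1 (p - 1), a ≡ (t : ℤ) [ZMOD ((p : ℤ) - 1)] ∧
            a ≡ θ ^ t [ZMOD (p : ℤ)]}) ∧
        q.1 + q.2 ≡ k [ZMOD ((p : ℤ) ^ 2 - p)]}.encard ≤ 2 := by
  intro k
  have hp2 : 2 ≤ p := hp.two_le
  apply encard_le_two_of_pairs
  rintro ⟨x, y⟩ hxy ⟨x', y'⟩ hxy'
  simp only [Set.mem_setOf_eq] at hxy hxy'
  obtain ⟨⟨hx0, hx1, t1, ht1, hxm1, hxm2⟩, ⟨hy0, hy1, t2, ht2, hym1, hym2⟩, hk⟩ := hxy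
  obtain ⟨⟨hx0', hx1', t3, ht3, hxm1', hxm2'⟩, ⟨hy0', hy1', t4, ht4, hym1', hym2'⟩, hk'⟩ := hxy'
  have hM : ((p : ℤ) ^ 2 - p) = (p : ℤ) * ((p : ℤ) - 1) := by ring
  rw [hM] at hk hk'
  have hS : x + y ≡ x' + y' [ZMOD (p : ℤ) * ((p : ℤ) - 1)] := hk.trans hk'.symm
  have hd1 : ((p : ℤ) - 1) ∣ (p : ℤ) * ((p : ℤ) - 1) := dvd_mul_left _ _
  have hd2 : (p : ℤ) ∣ (p : ℤ) * ((p : ℤ) - 1) := dvd_mul_right _ _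
  -- congruence mod p - 1 between the t's
  have hsum1 : (t1 : ℤ) + t2 ≡ (t3 : ℤ) + t4 [ZMOD ((p : ℤ) - 1)] :=
    ((hxm1.add hym1).symm.trans (hS.of_dvd hd1)).trans (hxm1'.add hym1')
  have hsumN : t1 + t2 ≡ t3 + t4 [MOD p - 1] := by
    rw [Nat.modEq_iff_dvd]
    have := hsum1.dvd
    have hcast : ((p - 1 : ℕ) : ℤ) = (p : ℤ) - 1 := by push_cast; omega
    rw [hcast]
    push_cast
    convert this using 1 <;> try ring
  -- congruence mod p between the powers
  have hsum2 : θ ^ t1 + θ ^ t2 ≡ θ ^ t3 + θ ^ t4 [ZMOD (p : ℤ)] :=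
    ((hxm2.add hym2).symm.trans (hS.of_dvd hd2)).trans (hxm2'.add hym2')
  rcases key_lemma hp hθ ht1 ht2 ht3 ht4 hsumN hsum2 with ⟨e13, e24⟩ | ⟨e14, e23⟩
  · left
    have hx : x = x' := by
      subst e13
      exact a_unique hp hx0 hx1 hx0' hx1' (hxm1.trans hxm1'.symm) (hxm2.trans hxm2'.symm)
    have hy : y = y' := by
      subst e24
      exact a_unique hp hy0 hy1 hy0' hy1' (hym1.trans hym1'.symm) (hym2.trans hym2'.symm)
    simp [hx, hy]
  · right
    have hx : x = y' := by
      subst e14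
      exact a_unique hp hx0 hx1 hy0' hy1' (hxm1.trans hym1'.symm) (hxm2.trans hym2'.symm)
    have hy : y = x' := by
      subst e23
      exact a_unique hp hy0 hy1 hx0' hx1' (hym1.trans hxm1'.symm) (hym2.trans hxm2'.symm)
    simp [Prod.swap, hx, hy]
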